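/- Let p ≥ 2, f as in the change of variables, and (v_n) a sequence of measurable functions on ℝᴺ with ∫_{ℝᴺ} |f(v_n)|^p → 0. Then inf_{ξ>0} (1/ξ){1 + ∫_{ℝᴺ} |f(ξ v_n)|^p} → 0 as n → ∞. -/

import Mathlib

open MeasureTheory

/-- if `∫ |f(v_n)|^p → 0` then
`inf_{ξ>0} (1/ξ){1 + ∫ |f(ξ v_n)|^p} → 0`. -/
theorem stmt12 (N : ℕ) (p : ℝ) (hp : 2 ≤ p) (f : ℝ → ℝ)
    (hodd : ∀ t : ℝ, f (-t) = - f t)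
    (hf0 : f 0 = 0)
    (hf' : ∀ t : ℝ, HasDerivAt f ((1 + 2 ^ (p - 1) * |f t| ^ p) ^ (-(1 / p))) t)
    (v : ℕ → EuclideanSpace ℝ (Fin N) → ℝ)
    (hmeas : ∀ n, Measurable (v n))
    (hto : Filter.Tendsto (fun n => ∫ x, |f (v n x)| ^ p) Filter.atTop (nhds 0)) :
    Filter.Tendsto
      (fun n => sInf ((fun ξ : ℝ =>
        (1 / ξ) * (1 + ∫ x, |f (ξ * v n x)| ^ p)) '' Set.Ioi 0))
      Filter.atTop (nhds 0) := by
  have hp0 : (0:ℝ) < p := lt_of_lt_of_le two_pos hp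
  set F : ℝ → ℝ := fun t => (1 + 2 ^ (p - 1) * |f t| ^ p) ^ (-(1 / p)) with hF
  have hbase : ∀ t, (0:ℝ) < 1 + 2 ^ (p - 1) * |f t| ^ p := by
    intro t; positivity
  have hFpos : ∀ t, 0 < F t := fun t => Real.rpow_pos_of_pos (hbase t) _
  have hmono : StrictMono f := strictMono_of_hasDerivAt_pos hf' hFpos
  have hdiff : Differentiable ℝ f := fun t => (hf' t).differentiableAt
  have hfc : Continuous f := hdiff.continuous
  have hfnn : ∀ t : ℝ, 0 ≤ t → 0 ≤ f t := fun t ht => hf0 ▸ hmono.monotone ht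
  have habs : ∀ t : ℝ, |f t| = f |t| := by
    intro t
    rcases le_or_gt 0 t with h | h
    · rw [abs_of_nonneg (hfnn t h), abs_of_nonneg h]
    · have h1 : f t < 0 := hf0 ▸ hmono h
      rw [abs_of_neg h1, abs_of_neg h, hodd t]
  have hFanti : ∀ a b : ℝ, |f a| ≤ |f b| → F b ≤ F a := by
    intro a b hab
    apply Real.rpow_le_rpow_of_nonpos (hbase a)
    · have : |f a| ^ p ≤ |f b| ^ p := Real.rpow_le_rpow (abs_nonneg _) hab hp0.le
      have h2 : (0:ℝ) < 2 ^ (p - 1) := Real.rpow_pos_of_pos two_pos _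
      nlinarith
    · rw [neg_nonpos]; positivity
  -- key inequality for nonneg t
  have key0 : ∀ ξ : ℝ, 1 ≤ ξ → ∀ t : ℝ, 0 ≤ t → f (ξ * t) ≤ ξ * f t := by
    intro ξ hξ t ht
    have hξ0 : (0:ℝ) ≤ ξ := le_trans zero_le_one hξ
    set φ : ℝ → ℝ := fun t => ξ * f t - f (ξ * t) with hφ
    have hφ' : ∀ s : ℝ, HasDerivAt φ (ξ * F s - F (ξ * s) * ξ) s := by
      intro s
      have h1 : HasDerivAt (fun s : ℝ => f (ξ * s)) (F (ξ * s) * ξ) s := by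
        have h2 : HasDerivAt (fun s : ℝ => ξ * s) ξ s := by
          simpa using (hasDerivAt_id s).const_mul ξ
        simpa [hF, one_div, Function.comp_def] using (hf' (ξ * s)).comp s h2
      exact ((hf' s).const_mul ξ).sub h1
    have hmonoφ : MonotoneOn φ (Set.Ici 0) := by
      apply monotoneOn_of_deriv_nonneg (convex_Ici 0)
        (fun s _ => ((hφ' s).continuousAt).continuousWithinAt)
        (fun s _ => ((hφ' s).differentiableAt).differentiableWithinAt)
      intro s hs
      rw [(hφ' s).deriv]
      rw [interior_Ici] at hs
      have hs0 : (0:ℝ) ≤ s := le_of_lt hs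
      have : F (ξ * s) ≤ F s := by
        apply hFanti
        rw [habs, habs]
        exact hmono.monotone (by rw [abs_of_nonneg hs0, abs_of_nonneg (by positivity : (0:ℝ) ≤ ξ * s)]; nlinarith)
      nlinarith
    have h0 : φ 0 ≤ φ t := hmonoφ Set.self_mem_Ici ht ht
    have : φ 0 = 0 := by simp [hφ, hf0]
    rw [this] at h0
    simpa [hφ, sub_nonneg] using h0
  -- key inequalities for all t
  have key : ∀ ξ : ℝ, 1 ≤ ξ → ∀ t : ℝ, |f (ξ * t)| ≤ ξ * |f t| := by
    intro ξ hξ t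
    have hξ0 : (0:ℝ) ≤ ξ := le_trans zero_le_one hξ
    rw [habs, habs, abs_mul, abs_of_nonneg hξ0]
    exact key0 ξ hξ |t| (abs_nonneg t)
  have keyge : ∀ ξ : ℝ, 1 ≤ ξ → ∀ t : ℝ, |f t| ≤ |f (ξ * t)| := by
    intro ξ hξ t
    rw [habs, habs, abs_mul, abs_of_nonneg (le_trans zero_le_one hξ)]
    exact hmono.monotone (by nlinarith [abs_nonneg t])
  -- measurability
  have hms : ∀ (c : ℝ) (n : ℕ), AEStronglyMeasurable
      (fun x : EuclideanSpace ℝ (Fin N) => |f (c * v n x)| ^ p) volume := by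
    intro c n
    exact ((hfc.measurable.comp ((hmeas n).const_mul c)).abs.pow_const p).aestronglyMeasurable
  -- integral bound
  have hIbound : ∀ (n : ℕ) (ξ : ℝ), 1 ≤ ξ →
      (∫ x, |f (ξ * v n x)| ^ p) ≤ ξ ^ p * ∫ x, |f (v n x)| ^ p := by
    intro n ξ hξ
    have hξ0 : (0:ℝ) ≤ ξ := le_trans zero_le_one hξ
    have hpt : ∀ x, |f (ξ * v n x)| ^ p ≤ ξ ^ p * |f (v n x)| ^ p := by
      intro x
      calc |f (ξ * v n x)| ^ p ≤ (ξ * |f (v n x)|) ^ p :=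
            Real.rpow_le_rpow (abs_nonneg _) (key ξ hξ (v n x)) hp0.le
        _ = ξ ^ p * |f (v n x)| ^ p := Real.mul_rpow hξ0 (abs_nonneg _)
    by_cases hint : Integrable (fun x => |f (v n x)| ^ p) volume
    · have hintc : Integrable (fun x => ξ ^ p * |f (v n x)| ^ p) volume := hint.const_mul _
      have hintξ : Integrable (fun x => |f (ξ * v n x)| ^ p) volume := by
        apply hintc.mono' (hms ξ n)
        filter_upwards with x
        rw [Real.norm_eq_abs, abs_of_nonneg (Real.rpow_nonneg (abs_nonneg _) p)]
        exact hpt x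
      calc (∫ x, |f (ξ * v n x)| ^ p) ≤ ∫ x, ξ ^ p * |f (v n x)| ^ p :=
            integral_mono hintξ hintc hpt
        _ = ξ ^ p * ∫ x, |f (v n x)| ^ p := integral_const_mul _ _
    · have hnotξ : ¬ Integrable (fun x => |f (ξ * v n x)| ^ p) volume := by
        intro h
        apply hint
        apply h.mono' (hms 1 n |>.congr ?_) ?_
        · filter_upwards with x; rw [one_mul]
        · filter_upwards with x
          rw [Real.norm_eq_abs, abs_of_nonneg (Real.rpow_nonneg (abs_nonneg _) p)]
          exact Real.rpow_le_rpow (abs_nonneg _) (keyge ξ hξ (v n x)) hp0.le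
      rw [integral_undef hnotξ, integral_undef hint, mul_zero]
  -- nonnegativity of set elements
  have hvalnn : ∀ (n : ℕ) (ξ : ℝ), 0 < ξ →
      0 ≤ (1 / ξ) * (1 + ∫ x, |f (ξ * v n x)| ^ p) := by
    intro n ξ hξ
    have h1 : 0 ≤ ∫ x, |f (ξ * v n x)| ^ p :=
      integral_nonneg fun x => Real.rpow_nonneg (abs_nonneg _) p
    positivity
  have hbdd : ∀ n, BddBelow ((fun ξ : ℝ =>
      (1 / ξ) * (1 + ∫ x, |f (ξ * v n x)| ^ p)) '' Set.Ioi 0) := by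
    intro n
    refine ⟨0, ?_⟩
    rintro y ⟨ξ, hξ, rfl⟩
    exact hvalnn n ξ hξ
  rw [Metric.tendsto_atTop]
  intro ε hε
  set ξ : ℝ := max 1 (2 / ε) with hξdef
  have hξ1 : (1:ℝ) ≤ ξ := le_max_left _ _
  have hξpos : (0:ℝ) < ξ := lt_of_lt_of_le one_pos hξ1
  have hδ : (0:ℝ) < (ξ ^ p)⁻¹ := by positivity
  obtain ⟨M, hM⟩ := Metric.tendsto_atTop.mp hto ((ξ ^ p)⁻¹) hδ
  refine ⟨M, fun n hn => ?_⟩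
  have hIn : (∫ x, |f (v n x)| ^ p) < (ξ ^ p)⁻¹ := by
    have := hM n hn
    rw [Real.dist_eq, sub_zero] at this
    exact lt_of_le_of_lt (le_abs_self _) this
  have hsinf_nonneg : 0 ≤ sInf ((fun ξ : ℝ =>
      (1 / ξ) * (1 + ∫ x, |f (ξ * v n x)| ^ p)) '' Set.Ioi 0) := by
    apply Real.sInf_nonneg
    rintro y ⟨ζ, hζ, rfl⟩
    exact hvalnn n ζ hζ
  rw [Real.dist_eq, sub_zero, abs_of_nonneg hsinf_nonneg]
  have hmem : (1 / ξ) * (1 + ∫ x, |f (ξ * v n x)| ^ p) ∈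
      ((fun ξ : ℝ => (1 / ξ) * (1 + ∫ x, |f (ξ * v n x)| ^ p)) '' Set.Ioi 0) :=
    ⟨ξ, hξpos, rfl⟩
  have hle := csInf_le (hbdd n) hmem
  have hI0 : 0 ≤ ∫ x, |f (v n x)| ^ p :=
    integral_nonneg fun x => Real.rpow_nonneg (abs_nonneg _) p
  have hb : (1 / ξ) * (1 + ∫ x, |f (ξ * v n x)| ^ p) < ε := by
    have h1 : (∫ x, |f (ξ * v n x)| ^ p) ≤ ξ ^ p * ∫ x, |f (v n x)| ^ p := hIbound n ξ hξ1
    have hξp : (0:ℝ) < ξ ^ p := Real.rpow_pos_of_pos hξpos p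
    have h2 : ξ ^ p * (∫ x, |f (v n x)| ^ p) < 1 := by
      calc ξ ^ p * (∫ x, |f (v n x)| ^ p) < ξ ^ p * (ξ ^ p)⁻¹ :=
            by apply mul_lt_mul_of_pos_left hIn hξp
        _ = 1 := mul_inv_cancel₀ (ne_of_gt hξp)
    have h3 : (1 / ξ) * (1 + ∫ x, |f (ξ * v n x)| ^ p) < (1 / ξ) * 2 := by
      apply mul_lt_mul_of_pos_left _ (by positivity)
      linarith
    have h4 : (1 / ξ) * 2 ≤ ε := by
      have h5 : 2 / ε ≤ ξ := le_max_right _ _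
      rw [div_mul_eq_mul_div, one_mul, div_le_iff₀ hξpos]
      calc (2:ℝ) = ε * (2 / ε) := by field_simp
        _ ≤ ε * ξ := by apply mul_le_mul_of_nonneg_left h5 hε.le
    linarith
  linarith
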